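/- Let E : ℝ³ → M₃(ℝ) be a Schwartz matrix field. Define the row-wise curl by (∇×E)_{im} = ∑_{k,j} ε_{mkj} ∂ₖE_{ij} (ε the Levi-Civita symbol) and the divergence (∇·E)ᵢ = ∑ⱼ ∂ⱼE_{ij}. Then for each s ≥ 0 there is a constant C such that ‖∇E‖_{H^s} ≤ C(‖∇·E‖_{H^s} + ‖∇×E‖_{H^s}). -/

import Mathlib

open MeasureTheory FourierTransform Real SchwartzMap RealInnerProductSpace

noncomputable section

abbrev E3 := EuclideanSpace ℝ (Fin 3)

/-- Partial derivative in the j-th coordinate direction. -/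
def pd (j : Fin 3) (f : E3 → ℝ) (x : E3) : ℝ :=
  fderiv ℝ f x (EuclideanSpace.single j 1)

/-- Fourier transform with the convention f̂(ξ) = ∫ f(x) e^{-i x·ξ} dx, of a real function. -/
def FTr (f : E3 → ℝ) (ξ : E3) : ℂ :=
  ∫ x, (f x : ℂ) * Complex.exp (-Complex.I * ((inner ℝ x ξ : ℝ) : ℂ))

/-- Squared H^s norm, defined via the Fourier transform. -/
def HsSq (s : ℝ) (f : E3 → ℝ) : ℝ :=
  ∫ ξ : E3, (1 + ‖ξ‖ ^ 2) ^ s * ‖FTr f ξ‖ ^ 2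

/-- Levi-Civita symbol on Fin 3. -/
def eps (m k j : Fin 3) : ℝ :=
  if (m, k, j) = (0, 1, 2) ∨ (m, k, j) = (1, 2, 0) ∨ (m, k, j) = (2, 0, 1) then 1
  else if (m, k, j) = (0, 2, 1) ∨ (m, k, j) = (2, 1, 0) ∨ (m, k, j) = (1, 0, 2) then -1
  else 0

def toC (φ : SchwartzMap E3 ℝ) : SchwartzMap E3 ℂ where
  toFun x := (φ x : ℂ)
  smooth' := Complex.ofRealCLM.contDiff.comp φ.smooth'
  decay' := by
    intro k n
    obtain ⟨C, hC⟩ := φ.decay' k n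
    refine ⟨C, fun x => ?_⟩
    have h : ‖iteratedFDeriv ℝ n (fun x => ((φ x : ℝ) : ℂ)) x‖
        = ‖iteratedFDeriv ℝ n (⇑φ) x‖ := by
      rw [show (fun x => ((φ x : ℝ) : ℂ)) = ⇑Complex.ofRealLI ∘ ⇑φ from rfl,
        Complex.ofRealLI.norm_iteratedFDeriv_comp_left (f := ⇑φ) (φ.smooth'.contDiffAt (x := x)) (mod_cast le_top)]
    show ‖x‖ ^ k * ‖iteratedFDeriv ℝ n (fun x => ((φ x : ℝ) : ℂ)) x‖ ≤ C
    rw [h]; exact hC x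

@[simp] lemma toC_apply (φ : SchwartzMap E3 ℝ) (x : E3) : toC φ x = (φ x : ℂ) := rfl

lemma ftr_eq (φ : SchwartzMap E3 ℝ) (ξ : E3) :
    FTr ⇑φ ξ = 𝓕 (⇑(toC φ)) ((2 * π)⁻¹ • ξ) := by
  rw [Real.fourier_eq']
  unfold FTr
  congr 1
  ext x
  have h1 : ⟪x, (2*π)⁻¹ • ξ⟫ = (2*π)⁻¹ * ⟪x, ξ⟫ := real_inner_smul_right x ξ _
  have h2 : (-2) * π * ((2*π)⁻¹ * ⟪x, ξ⟫) = -⟪x, ξ⟫ := by field_simp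
  rw [h1, h2, smul_eq_mul, toC_apply]
  push_cast
  ring

lemma ftr_integrand_integrable (φ : SchwartzMap E3 ℝ) (ξ : E3) :
    Integrable fun x : E3 => (φ x : ℂ) * Complex.exp (-Complex.I * ((inner ℝ x ξ : ℝ) : ℂ)) := by
  refine (φ.integrable.norm.mono' ?_ ?_)
  · exact ((Complex.continuous_ofReal.comp φ.continuous).mul
      (Complex.continuous_exp.comp
        (continuous_const.mul (Complex.continuous_ofReal.comp
          (continuous_id.inner continuous_const))))).aestronglyMeasurable
  · refine Filter.Eventually.of_forall fun x => ?_
    have : ‖Complex.exp (-Complex.I * ((inner ℝ x ξ : ℝ) : ℂ))‖ = 1 := by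
      rw [Complex.norm_exp]
      simp
    rw [norm_mul, this, mul_one, Complex.norm_real]

lemma ftr_zero (ξ : E3) : FTr ⇑(0 : SchwartzMap E3 ℝ) ξ = 0 := by
  unfold FTr
  simp

lemma ftr_add (φ ψ : SchwartzMap E3 ℝ) (ξ : E3) :
    FTr ⇑(φ + ψ) ξ = FTr ⇑φ ξ + FTr ⇑ψ ξ := by
  unfold FTr
  rw [← integral_add (ftr_integrand_integrable φ ξ) (ftr_integrand_integrable ψ ξ)]
  congr 1
  ext x
  simp only [SchwartzMap.add_apply]
  push_cast
  ring

lemma ftr_smul (c : ℝ) (φ : SchwartzMap E3 ℝ) (ξ : E3) :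
    FTr ⇑(c • φ) ξ = c * FTr ⇑φ ξ := by
  unfold FTr
  have h := integral_smul (μ := (volume : Measure E3)) (c : ℂ)
    (fun x : E3 => (φ x : ℂ) * Complex.exp (-Complex.I * ((inner ℝ x ξ : ℝ) : ℂ)))
  rw [smul_eq_mul] at h
  rw [← h]
  congr 1
  ext x
  simp only [SchwartzMap.smul_apply, smul_eq_mul]
  push_cast
  ring

lemma ftr_sum {ι : Type*} (s : Finset ι) (ψ : ι → SchwartzMap E3 ℝ) (ξ : E3) :
    FTr ⇑(∑ i ∈ s, ψ i) ξ = ∑ i ∈ s, FTr ⇑(ψ i) ξ := by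
  induction s using Finset.cons_induction with
  | empty => simpa using ftr_zero ξ
  | cons a s ha ih => rw [Finset.sum_cons, Finset.sum_cons, ftr_add, ih]

lemma schwartz_coe_sum {ι : Type*} (s : Finset ι) (ψ : ι → SchwartzMap E3 ℝ) (x : E3) :
    (∑ i ∈ s, ψ i) x = ∑ i ∈ s, ψ i x := by
  induction s using Finset.cons_induction with
  | empty => rfl
  | cons a s ha ih => rw [Finset.sum_cons, Finset.sum_cons, SchwartzMap.add_apply, ih]

lemma fderiv_toC_int (φ : SchwartzMap E3 ℝ) :
    Integrable (fderiv ℝ (⇑(toC φ))) (volume : Measure E3) := by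
  have h : fderiv ℝ (⇑(toC φ)) = ⇑(fderivCLM ℝ E3 ℂ (toC φ)) :=
    funext fun x => (fderivCLM_apply (𝕜 := ℝ) (toC φ) x).symm
  rw [h]
  exact (fderivCLM ℝ E3 ℂ (toC φ)).integrable

lemma fderiv_toC_eq (φ : SchwartzMap E3 ℝ) (x : E3) :
    fderiv ℝ (⇑(toC φ)) x = Complex.ofRealCLM.comp (fderiv ℝ (⇑φ) x) :=
  (Complex.ofRealCLM.hasFDerivAt.comp x φ.differentiableAt.hasFDerivAt).fderiv

lemma ftr_pd (φ : SchwartzMap E3 ℝ) (k : Fin 3) (ξ : E3) :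
    FTr (pd k ⇑φ) ξ = Complex.I * (ξ k) * FTr ⇑φ ξ := by
  have hpd : pd k ⇑φ = ⇑(LineDeriv.lineDerivOpCLM ℝ (SchwartzMap E3 ℝ) (EuclideanSpace.single k (1:ℝ)) φ) := rfl
  rw [hpd, ftr_eq, ftr_eq]
  have htoC : ⇑(toC (LineDeriv.lineDerivOpCLM ℝ (SchwartzMap E3 ℝ) (EuclideanSpace.single k (1:ℝ)) φ))
      = fun x => fderiv ℝ (⇑(toC φ)) x (EuclideanSpace.single k 1) := by
    ext x
    simp [fderiv_toC_eq, LineDeriv.lineDerivOpCLM_apply, SchwartzMap.lineDerivOp_apply_eq_fderiv]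
  rw [htoC]
  rw [← Real.fourier_continuousLinearMap_apply (fderiv_toC_int φ)]
  rw [Real.fourier_fderiv (toC φ).integrable
    (((toC φ).smooth 1).differentiable (by simp)) (fderiv_toC_int φ)]
  rw [VectorFourier.fourierSMulRight_apply]
  simp only [ContinuousLinearMap.neg_apply, innerSL_apply_apply]
  have hinner : ⟪(2*π)⁻¹ • ξ, EuclideanSpace.single k (1:ℝ)⟫ = (2*π)⁻¹ * ξ k := by
    rw [real_inner_smul_left, EuclideanSpace.inner_single_right]
    simp
  rw [show (innerSL ℝ) ((2 * π)⁻¹ • ξ) (EuclideanSpace.single k (1:ℝ)) = (2*π)⁻¹ * ξ k from hinner]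
  have hπ : (2*π) * (2*π)⁻¹ = 1 := mul_inv_cancel₀ (by positivity)
  push_cast
  simp only [smul_eq_mul, Complex.real_smul]
  push_cast
  have hπc : (π:ℂ) ≠ 0 := by exact_mod_cast Real.pi_ne_zero
  field_simp

set_option maxHeartbeats 1000000 in
lemma hsq_integrable (s : ℝ) (hs : 0 ≤ s) (φ : SchwartzMap E3 ℝ) :
    Integrable (fun ξ : E3 => (1 + ‖ξ‖ ^ 2) ^ s * ‖FTr ⇑φ ξ‖ ^ 2) (volume : Measure E3) := by
  set ψ : SchwartzMap E3 ℂ := SchwartzMap.fourierTransformCLM ℝ (toC φ) with hψdef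
  have hco : ⇑ψ = 𝓕 ⇑(toC φ) := SchwartzMap.fourier_coe (toC φ)
  have hψ : ∀ ξ : E3, FTr ⇑φ ξ = ψ ((2*π)⁻¹ • ξ) := fun ξ => by rw [ftr_eq, hco]
  set n : ℕ := ⌈s⌉₊ with hn
  set K : ℕ := 2*n + 4 with hK
  set B1 : ℝ := 2^K * (Finset.Iic ((K:ℕ),(0:ℕ))).sup (fun m => SchwartzMap.seminorm ℝ m.1 m.2) ψ with hB1def
  set B2 : ℝ := (Finset.Iic (((0:ℕ),(0:ℕ)) : ℕ × ℕ)).sup (fun m => SchwartzMap.seminorm ℝ m.1 m.2) ψ with hB2def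
  have hB1 : ∀ y : E3, (1+‖y‖)^K * ‖ψ y‖ ≤ B1 := by
    intro y
    have h := one_add_le_sup_seminorm_apply (𝕜 := ℝ) (m := ((K,0) : ℕ × ℕ)) le_rfl le_rfl ψ y
    rw [norm_iteratedFDeriv_zero] at h
    exact h
  have hB2 : ∀ y : E3, ‖ψ y‖ ≤ B2 := by
    intro y
    have h := one_add_le_sup_seminorm_apply (𝕜 := ℝ) (m := ((0,0) : ℕ × ℕ)) le_rfl le_rfl ψ y
    rw [norm_iteratedFDeriv_zero] at h
    simpa using h
  have hB1n : 0 ≤ B1 := le_trans (by positivity) (hB1 0)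
  have hB2n : 0 ≤ B2 := le_trans (norm_nonneg _) (hB2 0)
  set M : ℝ := (2*π)^K * B1 * B2 with hM
  have h2π : (1:ℝ) ≤ 2*π := by nlinarith [Real.pi_gt_three]
  have hcont : Continuous fun ξ : E3 => (1+‖ξ‖^2)^s * ‖FTr ⇑φ ξ‖^2 := by
    have he : (fun ξ : E3 => (1+‖ξ‖^2)^s * ‖FTr ⇑φ ξ‖^2)
        = fun ξ => (1+‖ξ‖^2)^s * ‖ψ ((2*π)⁻¹ • ξ)‖^2 := funext fun ξ => by rw [hψ]
    rw [he]
    apply Continuous.mul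
    · exact Continuous.rpow_const (by continuity) (fun x => Or.inl (by positivity))
    · exact ((ψ.continuous.comp (continuous_const_smul _)).norm.pow 2)
  refine Integrable.mono' ((integrable_one_add_norm (E := E3) (r := 4)
      (by simp [finrank_euclideanSpace]; norm_num)).const_mul M)
    hcont.aestronglyMeasurable (Filter.Eventually.of_forall fun ξ => ?_)
  set t := ‖ξ‖ with htdef
  have ht : 0 ≤ t := norm_nonneg _
  set y : E3 := (2*π)⁻¹ • ξ with hy
  have hty : t = (2*π) * ‖y‖ := by
    rw [hy, norm_smul]
    simp only [norm_inv, Real.norm_eq_abs]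
    rw [abs_of_pos (by positivity)]
    field_simp
    exact htdef
  have h1t : 1 + t ≤ (2*π) * (1+‖y‖) := by nlinarith [norm_nonneg y]
  have hw : (1+t^2)^s ≤ (1+t)^(2*n) :=
    calc (1+t^2)^s ≤ (1+t^2)^(n:ℝ) :=
          Real.rpow_le_rpow_of_exponent_le (by nlinarith) (Nat.le_ceil s)
      _ = (1+t^2)^(n:ℕ) := Real.rpow_natCast _ n
      _ ≤ ((1+t)^2)^(n:ℕ) := pow_le_pow_left₀ (by positivity) (by nlinarith) n
      _ = (1+t)^(2*n) := by rw [← pow_mul]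
  rw [Real.norm_of_nonneg (by positivity)]
  have h4 : ((1+t):ℝ)^((-4):ℝ) = ((1+t)^(4:ℕ))⁻¹ := by
    rw [Real.rpow_neg (by positivity), show (4:ℝ) = ((4:ℕ):ℝ) by norm_num, Real.rpow_natCast]
  rw [hψ ξ, h4, mul_comm M, inv_mul_eq_div, le_div_iff₀ (by positivity)]
  calc (1+t^2)^s * ‖ψ y‖^2 * (1+t)^4
      ≤ (1+t)^(2*n) * ‖ψ y‖^2 * (1+t)^4 := by
        have := sq_nonneg ‖ψ y‖
        have h14 : (0:ℝ) ≤ (1+t)^4 := by positivity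
        nlinarith [mul_le_mul_of_nonneg_right hw (sq_nonneg ‖ψ y‖)]
    _ = ((1+t)^K * ‖ψ y‖) * ‖ψ y‖ := by rw [hK]; ring
    _ ≤ (((2*π) * (1+‖y‖))^K * ‖ψ y‖) * ‖ψ y‖ := by
        have hp : (1+t)^K ≤ ((2*π) * (1+‖y‖))^K :=
          pow_le_pow_left₀ (by positivity) h1t K
        have := norm_nonneg (ψ y)
        nlinarith [mul_le_mul_of_nonneg_right (mul_le_mul_of_nonneg_right hp (norm_nonneg (ψ y))) (norm_nonneg (ψ y))]
    _ = ((2*π)^K * ((1+‖y‖)^K * ‖ψ y‖)) * ‖ψ y‖ := by rw [mul_pow]; ring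
    _ ≤ ((2*π)^K * B1) * B2 := by
        have hpk : (0:ℝ) ≤ (2*π)^K := by positivity
        have h1 : (2*π)^K * ((1+‖y‖)^K * ‖ψ y‖) ≤ (2*π)^K * B1 :=
          mul_le_mul_of_nonneg_left (hB1 y) hpk
        exact mul_le_mul h1 (hB2 y) (norm_nonneg _) (by positivity)
    _ = M := by rw [hM]

@[simp] lemma epsv_000 : eps 0 0 0 = 0 := by rw [eps, if_neg (by decide), if_neg (by decide)]
@[simp] lemma epsv_001 : eps 0 0 1 = 0 := by rw [eps, if_neg (by decide), if_neg (by decide)]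
@[simp] lemma epsv_002 : eps 0 0 2 = 0 := by rw [eps, if_neg (by decide), if_neg (by decide)]
@[simp] lemma epsv_010 : eps 0 1 0 = 0 := by rw [eps, if_neg (by decide), if_neg (by decide)]
@[simp] lemma epsv_011 : eps 0 1 1 = 0 := by rw [eps, if_neg (by decide), if_neg (by decide)]
@[simp] lemma epsv_012 : eps 0 1 2 = 1 := by rw [eps, if_pos (by decide)]
@[simp] lemma epsv_020 : eps 0 2 0 = 0 := by rw [eps, if_neg (by decide), if_neg (by decide)]
@[simp] lemma epsv_021 : eps 0 2 1 = -1 := by rw [eps, if_neg (by decide), if_pos (by decide)]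
@[simp] lemma epsv_022 : eps 0 2 2 = 0 := by rw [eps, if_neg (by decide), if_neg (by decide)]
@[simp] lemma epsv_100 : eps 1 0 0 = 0 := by rw [eps, if_neg (by decide), if_neg (by decide)]
@[simp] lemma epsv_101 : eps 1 0 1 = 0 := by rw [eps, if_neg (by decide), if_neg (by decide)]
@[simp] lemma epsv_102 : eps 1 0 2 = -1 := by rw [eps, if_neg (by decide), if_pos (by decide)]
@[simp] lemma epsv_110 : eps 1 1 0 = 0 := by rw [eps, if_neg (by decide), if_neg (by decide)]
@[simp] lemma epsv_111 : eps 1 1 1 = 0 := by rw [eps, if_neg (by decide), if_neg (by decide)]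
@[simp] lemma epsv_112 : eps 1 1 2 = 0 := by rw [eps, if_neg (by decide), if_neg (by decide)]
@[simp] lemma epsv_120 : eps 1 2 0 = 1 := by rw [eps, if_pos (by decide)]
@[simp] lemma epsv_121 : eps 1 2 1 = 0 := by rw [eps, if_neg (by decide), if_neg (by decide)]
@[simp] lemma epsv_122 : eps 1 2 2 = 0 := by rw [eps, if_neg (by decide), if_neg (by decide)]
@[simp] lemma epsv_200 : eps 2 0 0 = 0 := by rw [eps, if_neg (by decide), if_neg (by decide)]
@[simp] lemma epsv_201 : eps 2 0 1 = 1 := by rw [eps, if_pos (by decide)]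
@[simp] lemma epsv_202 : eps 2 0 2 = 0 := by rw [eps, if_neg (by decide), if_neg (by decide)]
@[simp] lemma epsv_210 : eps 2 1 0 = -1 := by rw [eps, if_neg (by decide), if_pos (by decide)]
@[simp] lemma epsv_211 : eps 2 1 1 = 0 := by rw [eps, if_neg (by decide), if_neg (by decide)]
@[simp] lemma epsv_212 : eps 2 1 2 = 0 := by rw [eps, if_neg (by decide), if_neg (by decide)]
@[simp] lemma epsv_220 : eps 2 2 0 = 0 := by rw [eps, if_neg (by decide), if_neg (by decide)]
@[simp] lemma epsv_221 : eps 2 2 1 = 0 := by rw [eps, if_neg (by decide), if_neg (by decide)]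
@[simp] lemma epsv_222 : eps 2 2 2 = 0 := by rw [eps, if_neg (by decide), if_neg (by decide)]

lemma normsq_c (z : ℂ) : ‖z‖ ^ 2 = z.re ^ 2 + z.im ^ 2 := by
  rw [Complex.sq_norm, Complex.normSq_apply]; ring

lemma key_alg (a : Fin 3 → ℝ) (v : Fin 3 → ℂ) :
    ∑ j : Fin 3, ∑ k : Fin 3, ‖Complex.I * (a k) * v j‖ ^ 2 =
      ‖∑ j : Fin 3, Complex.I * (a j) * v j‖ ^ 2 +
      ∑ m : Fin 3, ‖∑ k : Fin 3, ∑ j : Fin 3,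
        (eps m k j : ℝ) * (Complex.I * (a k) * v j)‖ ^ 2 := by
  simp only [Fin.sum_univ_three, epsv_000, epsv_001, epsv_002, epsv_010, epsv_011, epsv_012,
    epsv_020, epsv_021, epsv_022, epsv_100, epsv_101, epsv_102, epsv_110, epsv_111, epsv_112,
    epsv_120, epsv_121, epsv_122, epsv_200, epsv_201, epsv_202, epsv_210, epsv_211, epsv_212,
    epsv_220, epsv_221, epsv_222]
  simp only [normsq_c, Complex.add_re, Complex.add_im, Complex.mul_re, Complex.mul_im,
    Complex.I_re, Complex.I_im, Complex.ofReal_re, Complex.ofReal_im, Complex.neg_re,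
    Complex.neg_im, Complex.zero_re, Complex.zero_im, Complex.one_re, Complex.one_im,
    Complex.ofReal_zero, Complex.ofReal_one, Complex.ofReal_neg, zero_mul, one_mul,
    neg_mul, mul_neg, neg_neg, zero_add, add_zero, mul_zero, zero_sub, sub_zero]
  ring

lemma hsq_nonneg (s : ℝ) (f : E3 → ℝ) : 0 ≤ HsSq s f :=
  integral_nonneg fun ξ => by positivity

lemma sqrt_add_le' (a b : ℝ) (ha : 0 ≤ a) (hb : 0 ≤ b) :
    Real.sqrt (a + b) ≤ Real.sqrt a + Real.sqrt b := by
  have h2 : a + b ≤ (Real.sqrt a + Real.sqrt b)^2 := by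
    nlinarith [Real.sq_sqrt ha, Real.sq_sqrt hb, Real.sqrt_nonneg a, Real.sqrt_nonneg b]
  have h1 : Real.sqrt (a+b) ≤ Real.sqrt ((Real.sqrt a + Real.sqrt b)^2) :=
    Real.sqrt_le_sqrt h2
  rwa [Real.sqrt_sq (by positivity)] at h1

lemma row_eq (s : ℝ) (hs : 0 ≤ s) (F : Fin 3 → SchwartzMap E3 ℝ) :
    ∑ j : Fin 3, ∑ k : Fin 3, HsSq s (pd k ⇑(F j)) =
      HsSq s (fun x => ∑ j : Fin 3, pd j ⇑(F j) x) +
      ∑ m : Fin 3, HsSq s (fun x => ∑ k : Fin 3, ∑ j : Fin 3, eps m k j * pd k ⇑(F j) x) := by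
  set P : Fin 3 → Fin 3 → SchwartzMap E3 ℝ :=
    fun k j => LineDeriv.lineDerivOpCLM ℝ (SchwartzMap E3 ℝ) (EuclideanSpace.single k (1:ℝ)) (F j) with hPdef
  have hP : ∀ k j, pd k ⇑(F j) = ⇑(P k j) := fun _ _ => rfl
  set D : SchwartzMap E3 ℝ := ∑ j : Fin 3, P j j with hDdef
  set R : Fin 3 → SchwartzMap E3 ℝ := fun m => ∑ k : Fin 3, ∑ j : Fin 3, eps m k j • P k j
    with hRdef
  have hD : (fun x => ∑ j : Fin 3, pd j ⇑(F j) x) = ⇑D := by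
    funext x
    rw [hDdef, schwartz_coe_sum]
    exact Finset.sum_congr rfl fun j _ => by rw [hP]
  have hR : ∀ m, (fun x => ∑ k : Fin 3, ∑ j : Fin 3, eps m k j * pd k ⇑(F j) x) = ⇑(R m) := by
    intro m
    funext x
    rw [hRdef]
    rw [schwartz_coe_sum]
    refine Finset.sum_congr rfl fun k _ => ?_
    rw [schwartz_coe_sum]
    refine Finset.sum_congr rfl fun j _ => ?_
    rw [SchwartzMap.smul_apply, smul_eq_mul, hP]
  -- pointwise Fourier identities
  have hFP : ∀ (k j) (ξ : E3), FTr ⇑(P k j) ξ = Complex.I * (ξ k) * FTr ⇑(F j) ξ := by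
    intro k j ξ
    rw [← hP]
    exact ftr_pd (F j) k ξ
  have hFD : ∀ ξ : E3, FTr ⇑D ξ = ∑ j : Fin 3, Complex.I * (ξ j) * FTr ⇑(F j) ξ := by
    intro ξ
    rw [hDdef, ftr_sum]
    exact Finset.sum_congr rfl fun j _ => hFP j j ξ
  have hFR : ∀ (m) (ξ : E3), FTr ⇑(R m) ξ
      = ∑ k : Fin 3, ∑ j : Fin 3, (eps m k j : ℝ) * (Complex.I * (ξ k) * FTr ⇑(F j) ξ) := by
    intro m ξ
    rw [hRdef]
    dsimp only
    rw [ftr_sum]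
    refine Finset.sum_congr rfl fun k _ => ?_
    rw [ftr_sum]
    refine Finset.sum_congr rfl fun j _ => ?_
    rw [ftr_smul, hFP]
  have key : ∀ ξ : E3,
      ∑ j : Fin 3, ∑ k : Fin 3, (1 + ‖ξ‖ ^ 2) ^ s * ‖FTr ⇑(P k j) ξ‖ ^ 2
      = (1 + ‖ξ‖ ^ 2) ^ s * ‖FTr ⇑D ξ‖ ^ 2
        + ∑ m : Fin 3, (1 + ‖ξ‖ ^ 2) ^ s * ‖FTr ⇑(R m) ξ‖ ^ 2 := by
    intro ξ
    have hka := key_alg (fun k => ξ k) (fun j => FTr ⇑(F j) ξ)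
    simp only [hFP, hFD, hFR]
    simp only [← Finset.mul_sum]
    rw [hka, mul_add]
  -- now integrals
  calc ∑ j : Fin 3, ∑ k : Fin 3, HsSq s (pd k ⇑(F j))
      = ∑ j : Fin 3, ∑ k : Fin 3, HsSq s ⇑(P k j) := by
        refine Finset.sum_congr rfl fun j _ => Finset.sum_congr rfl fun k _ => ?_
        rw [hP]
    _ = ∫ ξ : E3, ∑ j : Fin 3, ∑ k : Fin 3, (1 + ‖ξ‖ ^ 2) ^ s * ‖FTr ⇑(P k j) ξ‖ ^ 2 := by
        rw [integral_finset_sum _ fun j _ =>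
          integrable_finset_sum _ fun k _ => hsq_integrable s hs (P k j)]
        refine Finset.sum_congr rfl fun j _ => ?_
        rw [integral_finset_sum _ fun k _ => hsq_integrable s hs (P k j)]
        rfl
    _ = ∫ ξ : E3, ((1 + ‖ξ‖ ^ 2) ^ s * ‖FTr ⇑D ξ‖ ^ 2
          + ∑ m : Fin 3, (1 + ‖ξ‖ ^ 2) ^ s * ‖FTr ⇑(R m) ξ‖ ^ 2) := by
        exact integral_congr_ae (Filter.Eventually.of_forall fun ξ => key ξ)
    _ = HsSq s ⇑D + ∑ m : Fin 3, HsSq s ⇑(R m) := by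
        rw [integral_add (hsq_integrable s hs D)
          (integrable_finset_sum _ fun m _ => hsq_integrable s hs (R m))]
        rw [integral_finset_sum _ fun m _ => hsq_integrable s hs (R m)]
        rfl
    _ = HsSq s (fun x => ∑ j : Fin 3, pd j ⇑(F j) x)
        + ∑ m : Fin 3, HsSq s (fun x => ∑ k : Fin 3, ∑ j : Fin 3, eps m k j * pd k ⇑(F j) x) := by
        rw [hD]
        refine congrArg _ (Finset.sum_congr rfl fun m _ => ?_)
        rw [hR m]



/-- the div-curl estimate ‖∇E‖_{H^s} ≤ C (‖∇·E‖_{H^s} + ‖∇×E‖_{H^s})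
for Schwartz matrix fields E, where (∇×E)_{im} = ∑ ε_{mkj} ∂ₖE_{ij} and
(∇·E)ᵢ = ∑ⱼ ∂ⱼE_{ij}. -/
theorem stmt_8 (s : ℝ) (hs : 0 ≤ s) :
    ∃ C > (0 : ℝ), ∀ E : Fin 3 → Fin 3 → SchwartzMap E3 ℝ,
      Real.sqrt (∑ i : Fin 3, ∑ j : Fin 3, ∑ k : Fin 3, HsSq s (pd k (E i j))) ≤
        C * (Real.sqrt (∑ i : Fin 3, HsSq s fun x => ∑ j : Fin 3, pd j (E i j) x) +
          Real.sqrt (∑ i : Fin 3, ∑ m : Fin 3,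
            HsSq s fun x => ∑ k : Fin 3, ∑ j : Fin 3, eps m k j * pd k (E i j) x)) := by
  refine ⟨1, one_pos, fun E => ?_⟩
  rw [one_mul]
  have hsum : ∑ i : Fin 3, ∑ j : Fin 3, ∑ k : Fin 3, HsSq s (pd k (E i j))
      = (∑ i : Fin 3, HsSq s fun x => ∑ j : Fin 3, pd j (E i j) x)
        + (∑ i : Fin 3, ∑ m : Fin 3,
            HsSq s fun x => ∑ k : Fin 3, ∑ j : Fin 3, eps m k j * pd k (E i j) x) := by
    rw [← Finset.sum_add_distrib]
    exact Finset.sum_congr rfl fun i _ => row_eq s hs (E i)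
  rw [hsum]
  exact sqrt_add_le' _ _
    (Finset.sum_nonneg fun i _ => hsq_nonneg s _)
    (Finset.sum_nonneg fun i _ => Finset.sum_nonneg fun m _ => hsq_nonneg s _)
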